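/- Let d ≥ 1 and 1 ≤ N ≤ d. Define c(k) := 1/√d for all k ∈ Fin d and A(S) := 1/√(C(d,N)) for every N-subset S of Fin d (binomial coefficient C(d,N)). Then, with A(T∪{k}) := 0 for k ∈ T, one has ∑_{T : (N−1)-subsets of Fin d} |∑_k A(T ∪ {k}) · c(k)|² = (N/d)·(d − N + 1). -/

import Mathlib

open Finset

theorem stmt4 (d N : ℕ) (hd : 1 ≤ d) (hN1 : 1 ≤ N) (hNd : N ≤ d)
    (A : Finset (Fin d) → ℂ) (hA : ∀ S, A S = (1 / Real.sqrt (d.choose N) : ℝ))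
    (c : Fin d → ℂ) (hc : ∀ k, c k = (1 / Real.sqrt d : ℝ)) :
    ∑ T ∈ Finset.powersetCard (N - 1) (Finset.univ : Finset (Fin d)),
      ‖∑ k, (if k ∈ T then 0 else A (insert k T)) * c k‖ ^ 2
      = ((N : ℝ) / d) * ((d : ℝ) - N + 1) := by
  have hCpos : 0 < (d.choose N : ℝ) := by exact_mod_cast Nat.choose_pos hNd
  have hdpos : 0 < (d : ℝ) := by exact_mod_cast hd
  set a : ℝ := 1 / Real.sqrt (d.choose N) with ha
  set b : ℝ := 1 / Real.sqrt d with hb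
  have key : ∀ T ∈ Finset.powersetCard (N-1) (Finset.univ : Finset (Fin d)),
      ‖∑ k, (if k ∈ T then 0 else A (insert k T)) * c k‖ ^ 2
      = (((d - N + 1 : ℕ) : ℝ) * (a * b))^2 := by
    intro T hT
    rw [Finset.mem_powersetCard_univ] at hT
    have h1 : (∑ k, (if k ∈ T then 0 else A (insert k T)) * c k)
        = ((((d - N + 1 : ℕ) : ℝ) * (a * b) : ℝ) : ℂ) := by
      have hterm : ∀ k : Fin d, (if k ∈ T then 0 else A (insert k T)) * c k
          = (if k ∈ T then (0:ℂ) else ((a*b : ℝ) : ℂ)) := by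
        intro k
        by_cases h : k ∈ T <;> simp [h, hA, hc, ha, hb]
      rw [Finset.sum_congr rfl (fun k _ => hterm k), Finset.sum_ite,
        Finset.sum_const_zero, Finset.sum_const, zero_add]
      have hfil : Finset.filter (fun k => ¬ k ∈ T) Finset.univ = Tᶜ := by
        ext k; simp
      rw [hfil, Finset.card_compl, hT]
      have : Fintype.card (Fin d) - (N - 1) = d - N + 1 := by
        simp only [Fintype.card_fin]; omega
      rw [this]
      push_cast
      ring
    rw [h1, Complex.norm_real, Real.norm_eq_abs, sq_abs]
  rw [Finset.sum_congr rfl key, Finset.sum_const, Finset.card_powersetCard,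
    Finset.card_univ, Fintype.card_fin, nsmul_eq_mul]
  have hid : (d.choose (N-1) : ℝ) * ((d - N + 1 : ℕ) : ℝ) = N * d.choose N := by
    have h := Nat.choose_succ_right_eq d (N-1)
    have h' : N - 1 + 1 = N := by omega
    rw [h'] at h
    have h'' : d - (N - 1) = d - N + 1 := by omega
    rw [h''] at h
    rw [mul_comm (N:ℝ)]
    exact_mod_cast h.symm
  have hab : (a * b)^2 = 1 / ((d.choose N : ℝ) * d) := by
    rw [mul_pow, ha, hb, div_pow, div_pow, Real.sq_sqrt hCpos.le, Real.sq_sqrt hdpos.le]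
    ring
  have hm : ((d - N + 1 : ℕ) : ℝ) = (d : ℝ) - N + 1 := by
    push_cast [Nat.cast_sub hNd]; ring
  rw [mul_pow, hab, ← hm]
  rw [hm] at hid
  field_simp
  rw [hm]
  linear_combination hid
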